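/- For the (α, π, L_E)-Gibbs algorithm, defined by the posterior P_{W|S=s}(w) = π(w) e^{−α L_E(w,s)} / V(s,α) with V(s,α) = ∫ π(w) e^{−α L_E(w,s)} dw, the expected generalization error equals I_SKL(W;S)/α, i.e., α · E_{P_{W,S}}[L_P(W) − L_E(W,S)] = I_SKL(W;S). -/

import Mathlib

open MeasureTheory ProbabilityTheory
open scoped ENNReal

/-- Kullback-Leibler divergence `D(P‖Q) = ∫ log (dP/dQ) dP`. -/
noncomputable def klReal {X : Type*} [MeasurableSpace X] (P Q : Measure X) : ℝ :=
  ∫ x, Real.log (P.rnDeriv Q x).toReal ∂P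


private lemma logToReal_inv (x : ℝ≥0∞) : Real.log (x⁻¹).toReal = - Real.log x.toReal := by
  rw [ENNReal.toReal_inv, Real.log_inv]

private lemma aux_withDensity_prod {A B : Type*} [MeasurableSpace A] [MeasurableSpace B]
    (μ : Measure A) [SFinite μ] (ν : Measure B) [SFinite ν]
    (F : A × B → ℝ≥0∞) (hF : Measurable F) (ρ : Measure (A × B))
    (hρ : ∀ s : Set (A × B), MeasurableSet s →
      ρ s = ∫⁻ a, ∫⁻ b in Prod.mk a ⁻¹' s, F (a, b) ∂ν ∂μ) :
    ρ = (μ.prod ν).withDensity F := by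
  ext s hs
  rw [hρ s hs, withDensity_apply _ hs]
  calc ∫⁻ a, ∫⁻ b in Prod.mk a ⁻¹' s, F (a, b) ∂ν ∂μ
      = ∫⁻ a, ∫⁻ b, s.indicator F (a, b) ∂ν ∂μ := by
        refine lintegral_congr fun a => ?_
        rw [← lintegral_indicator (measurable_prodMk_left hs)]
        refine lintegral_congr fun b => ?_
        by_cases h : (a, b) ∈ s <;> simp [Set.indicator_apply, Set.mem_preimage, h]
    _ = ∫⁻ p, s.indicator F p ∂(μ.prod ν) := (lintegral_prod _ (hF.indicator hs).aemeasurable).symm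
    _ = ∫⁻ p in s, F p ∂(μ.prod ν) := lintegral_indicator hs F

set_option maxHeartbeats 1000000 in

/-- For the `(α, π, L_E)`-Gibbs algorithm `P_{W|S=s} = π(w) e^{−α L_E(w,s)} / V(s,α)`,
the expected generalization error times `α` equals the symmetrized KL information:
`α · E_{P_{W,S}}[L_P(W) − L_E(W,S)] = I_SKL(W;S)`. Here the joint law of `(S,W)` is
`P_S ⊗ₘ κ` and `I_SKL = D(joint‖prod of marginals) + D(prod of marginals‖joint)`. -/
theorem stmt_4 {W Z : Type*} [MeasurableSpace W] [MeasurableSpace Z]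
    (n : ℕ) (hn : 0 < n)
    (μS : Measure (Fin n → Z)) [IsProbabilityMeasure μS]  -- law `P_S` of the samples
    (ℓ : W → Z → ℝ) (hℓmeas : Measurable (Function.uncurry ℓ)) (hℓpos : ∀ w z, 0 ≤ ℓ w z)
    (alpha : ℝ) (halpha : 0 < alpha)
    (π0 : Measure W) [IsProbabilityMeasure π0]  -- the prior `π`
    (LE : W → (Fin n → Z) → ℝ) (hLE : ∀ w s, LE w s = (1 / (n : ℝ)) * ∑ i, ℓ w (s i))
    (LP : W → ℝ) (hLP : ∀ w, LP w = ∫ s, LE w s ∂μS)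
    (V : (Fin n → Z) → ℝ) (hV : ∀ s, V s = ∫ w, Real.exp (-alpha * LE w s) ∂π0)
    (hVpos : ∀ s, 0 < V s)
    (hVint : ∀ s, Integrable (fun w => Real.exp (-alpha * LE w s)) π0)
    (κ : ProbabilityTheory.Kernel (Fin n → Z) W) [IsMarkovKernel κ]
    (hκ : ∀ s, κ s =
      π0.withDensity (fun w => ENNReal.ofReal (Real.exp (-alpha * LE w s) / V s)))
    -- absolute continuity and integrability conditions
    (hac : (μS ⊗ₘ κ) ≪ μS.prod (μS ⊗ₘ κ).snd)
    (hac' : μS.prod (μS ⊗ₘ κ).snd ≪ (μS ⊗ₘ κ))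
    (hint1 : Integrable
      (fun p => Real.log (((μS ⊗ₘ κ).rnDeriv (μS.prod (μS ⊗ₘ κ).snd)) p).toReal) (μS ⊗ₘ κ))
    (hint2 : Integrable
      (fun p => Real.log (((μS.prod (μS ⊗ₘ κ).snd).rnDeriv (μS ⊗ₘ κ)) p).toReal)
      (μS.prod (μS ⊗ₘ κ).snd))
    (hint3 : Integrable (fun p => LE p.2 p.1) (μS ⊗ₘ κ))
    (hint4 : Integrable (fun p => LE p.2 p.1) (μS.prod (μS ⊗ₘ κ).snd))
    (hint5 : ∀ w, Integrable (LE w) μS) :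
    alpha * ∫ p, (LP p.2 - LE p.2 p.1) ∂(μS ⊗ₘ κ) =
      klReal (μS ⊗ₘ κ) (μS.prod (μS ⊗ₘ κ).snd) +
        klReal (μS.prod (μS ⊗ₘ κ).snd) (μS ⊗ₘ κ) := by
  set P : Measure ((Fin n → Z) × W) := μS ⊗ₘ κ with hPdef
  set ν : Measure W := P.snd with hνdef
  set Q : Measure ((Fin n → Z) × W) := μS.prod ν with hQdef
  set R : Measure ((Fin n → Z) × W) := μS.prod π0 with hRdef
  -- measurability
  have hLEm : Measurable fun p : (Fin n → Z) × W => LE p.2 p.1 := by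
    have h : (fun p : (Fin n → Z) × W => LE p.2 p.1)
        = fun p => (1 / (n : ℝ)) * ∑ i, ℓ p.2 (p.1 i) := by
      funext p; rw [hLE]
    rw [h]
    refine Measurable.const_mul ?_ _
    refine Finset.measurable_sum _ (fun i _ => ?_)
    exact hℓmeas.comp (measurable_snd.prodMk ((measurable_pi_apply i).comp measurable_fst))
  have hexpm : Measurable fun p : (Fin n → Z) × W => Real.exp (-alpha * LE p.2 p.1) :=
    Real.measurable_exp.comp (hLEm.const_mul (-alpha))
  have hVm : Measurable V := by
    have h1 : StronglyMeasurable fun p : (Fin n → Z) × W =>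
        Real.exp (-alpha * LE p.2 p.1) := hexpm.stronglyMeasurable
    have h2 := h1.integral_prod_right' (ν := π0)
    have h3 : V = fun s => ∫ w, Real.exp (-alpha * LE w s) ∂π0 := funext hV
    rw [h3]; exact h2.measurable
  set f : (Fin n → Z) × W → ℝ≥0∞ :=
    fun p => ENNReal.ofReal (Real.exp (-alpha * LE p.2 p.1) / V p.1) with hfdef
  have hfm : Measurable f := (hexpm.div (hVm.comp measurable_fst)).ennreal_ofReal
  -- P as density w.r.t. R
  have hPR : P = R.withDensity f := by
    refine aux_withDensity_prod μS π0 f hfm P ?_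
    intro s hs
    rw [hPdef, Measure.compProd_apply hs]
    refine lintegral_congr fun a => ?_
    rw [hκ a, withDensity_apply _ (measurable_prodMk_left hs)]
  -- ν and π0 mutually absolutely continuous
  have hν_ac : ν ≪ π0 := by
    refine Measure.AbsolutelyContinuous.mk fun A hA h0 => ?_
    rw [hνdef, Measure.snd_apply hA, hPdef, Measure.compProd_apply (measurable_snd hA)]
    have h1 : ∀ a, κ a (Prod.mk a ⁻¹' (Prod.snd ⁻¹' A)) = 0 := by
      intro a
      have hpre : Prod.mk a ⁻¹' (Prod.snd ⁻¹' A) = A := rfl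
      rw [hpre, hκ a, withDensity_apply _ hA, Measure.restrict_eq_zero.mpr h0,
        lintegral_zero_measure]
    simp [h1]
  have hπ_ac : π0 ≪ ν := by
    refine Measure.AbsolutelyContinuous.mk fun A hA h0 => ?_
    rw [hνdef, Measure.snd_apply hA, hPdef, Measure.compProd_apply (measurable_snd hA)] at h0
    have hpre : ∀ a : Fin n → Z, Prod.mk a ⁻¹' (Prod.snd ⁻¹' A) = A := fun a => rfl
    simp_rw [hpre] at h0
    rw [lintegral_eq_zero_iff (κ.measurable_coe hA)] at h0
    obtain ⟨a, ha0⟩ := h0.exists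
    have ha : κ a A = 0 := ha0
    have hfa : Measurable fun w => ENNReal.ofReal (Real.exp (-alpha * LE w a) / V a) :=
      by simpa [hfdef, Function.comp_def] using hfm.comp (measurable_prodMk_left (x := a))
    rw [hκ a, withDensity_apply_eq_zero hfa] at ha
    have huniv : {x | (fun w => ENNReal.ofReal (Real.exp (-alpha * LE w a) / V a)) x ≠ 0}
        = Set.univ := by
      ext w
      simp only [Set.mem_setOf_eq, Set.mem_univ, iff_true]
      exact ne_of_gt (ENNReal.ofReal_pos.mpr (div_pos (Real.exp_pos _) (hVpos a)))
    rwa [huniv, Set.univ_inter] at ha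
  -- the density of ν w.r.t. π0
  set q0 : W → ℝ≥0∞ := ν.rnDeriv π0 with hq0def
  have hq0m : Measurable q0 := Measure.measurable_rnDeriv ν π0
  have hν_eq : ν = π0.withDensity q0 := (Measure.withDensity_rnDeriv_eq ν π0 hν_ac).symm
  have hq0_pos : ∀ᵐ w ∂π0, 0 < q0 w := Measure.rnDeriv_pos' hπ_ac
  have hq0_ne_top : ∀ᵐ w ∂π0, q0 w ≠ ∞ := Measure.rnDeriv_ne_top ν π0
  have hq0sm : Measurable fun p : (Fin n → Z) × W => q0 p.2 := hq0m.comp measurable_snd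
  -- Q as density w.r.t. R
  have hQR : Q = R.withDensity (fun p => q0 p.2) := by
    refine aux_withDensity_prod μS π0 _ hq0sm Q ?_
    intro s hs
    rw [hQdef, Measure.prod_apply hs]
    refine lintegral_congr fun a => ?_
    rw [hν_eq, withDensity_apply _ (measurable_prodMk_left hs)]
  -- a.e. positivity and finiteness of q0 on R
  have hq_goodR : ∀ᵐ p ∂ R, 0 < q0 p.2 ∧ q0 p.2 ≠ ∞ := by
    have hEmeas : MeasurableSet {w : W | ¬(0 < q0 w ∧ q0 w ≠ ∞)} := by
      have : MeasurableSet {w : W | 0 < q0 w ∧ q0 w ≠ ∞} :=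
        ((measurableSet_lt measurable_const hq0m).inter
          ((hq0m (measurableSet_singleton ∞)).compl))
      exact this.compl
    have hE0 : π0 {w : W | ¬(0 < q0 w ∧ q0 w ≠ ∞)} = 0 := by
      have := hq0_pos.and hq0_ne_top
      rwa [ae_iff] at this
    rw [ae_iff]
    have hset : {p : (Fin n → Z) × W | ¬(0 < q0 p.2 ∧ q0 p.2 ≠ ∞)}
        = (Set.univ : Set (Fin n → Z)) ×ˢ {w : W | ¬(0 < q0 w ∧ q0 w ≠ ∞)} := by
      ext p; simp
    rw [hRdef, hset, Measure.prod_prod, hE0, mul_zero]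
  -- absolute continuity w.r.t. R
  have hQ_ac_R : Q ≪ R := by
    rw [hQR]; exact withDensity_absolutelyContinuous R _
  have hP_ac_R : P ≪ R := by
    rw [hPR]; exact withDensity_absolutelyContinuous R _
  -- Radon–Nikodym derivative of P w.r.t. Q, via R
  have hr1 : P.rnDeriv Q =ᵐ[R] fun p => (q0 p.2)⁻¹ * P.rnDeriv R p := by
    rw [hQR]
    refine Measure.rnDeriv_withDensity_right P R hq0sm.aemeasurable ?_ ?_
    · filter_upwards [hq_goodR] with p hp using hp.1.ne'
    · filter_upwards [hq_goodR] with p hp using hp.2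
  have hr2 : P.rnDeriv R =ᵐ[R] f := by
    conv_lhs => rw [hPR]
    exact Measure.rnDeriv_withDensity R hfm
  -- logarithmic identity, a.e. w.r.t. R
  have hlogR : ∀ᵐ p ∂ R, Real.log (P.rnDeriv Q p).toReal
      = -(alpha * LE p.2 p.1) - Real.log (V p.1) - Real.log (q0 p.2).toReal := by
    filter_upwards [hr1, hr2, hq_goodR] with p h1 h2 hq
    rw [h1, h2]
    have hq1 : (q0 p.2).toReal ≠ 0 := (ENNReal.toReal_pos hq.1.ne' hq.2).ne'
    have hfp : (f p).toReal = Real.exp (-alpha * LE p.2 p.1) / V p.1 := by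
      rw [hfdef]
      exact ENNReal.toReal_ofReal (le_of_lt (div_pos (Real.exp_pos _) (hVpos p.1)))
    rw [ENNReal.toReal_mul, ENNReal.toReal_inv, hfp,
      Real.log_mul (inv_ne_zero hq1) (div_pos (Real.exp_pos _) (hVpos p.1)).ne',
      Real.log_inv,
      Real.log_div (Real.exp_ne_zero _) (hVpos p.1).ne', Real.log_exp]
    ring
  have hlogP : ∀ᵐ p ∂P, Real.log (P.rnDeriv Q p).toReal
      = -(alpha * LE p.2 p.1) - Real.log (V p.1) - Real.log (q0 p.2).toReal :=
    hP_ac_R.ae_le hlogR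
  have hlogQ : ∀ᵐ p ∂Q, Real.log (P.rnDeriv Q p).toReal
      = -(alpha * LE p.2 p.1) - Real.log (V p.1) - Real.log (q0 p.2).toReal :=
    hQ_ac_R.ae_le hlogR
  -- notation for the two marginal log terms
  set u : (Fin n → Z) → ℝ := fun s => Real.log (V s) with hudef
  set v : W → ℝ := fun w => Real.log (q0 w).toReal with hvdef
  set ψ : (Fin n → Z) × W → ℝ := fun p => u p.1 + v p.2 with hψdef
  have hum : Measurable u := Real.measurable_log.comp hVm
  have hvm : Measurable v := Real.measurable_log.comp hq0m.ennreal_toReal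
  -- ψ in terms of log rnDeriv, P side
  have hψP : ψ =ᵐ[P] fun p =>
      -Real.log (P.rnDeriv Q p).toReal - alpha * LE p.2 p.1 := by
    filter_upwards [hlogP] with p hp
    simp only [hψdef, hudef, hvdef]
    rw [hp]; ring
  have iψP : Integrable ψ P := (hint1.neg'.sub (hint3.const_mul alpha)).congr hψP.symm
  have intψP : ∫ p, ψ p ∂P = -klReal P Q - alpha * ∫ p, LE p.2 p.1 ∂P := by
    rw [integral_congr_ae hψP, integral_sub hint1.neg' (hint3.const_mul alpha),
      integral_neg, integral_const_mul alpha _]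
    rfl
  -- ψ in terms of log rnDeriv, Q side
  have hinv : (fun p => Real.log (P.rnDeriv Q p).toReal)
      =ᵐ[Q] fun p => -Real.log (Q.rnDeriv P p).toReal := by
    filter_upwards [Measure.inv_rnDeriv hac'] with p hp
    rw [← hp, Pi.inv_apply, logToReal_inv]
  have ilogQ : Integrable (fun p => Real.log (P.rnDeriv Q p).toReal) Q :=
    hint2.neg.congr hinv.symm
  have intlogQ : ∫ p, Real.log (P.rnDeriv Q p).toReal ∂Q = -klReal Q P := by
    rw [integral_congr_ae hinv, integral_neg]
    rfl
  have hψQ : ψ =ᵐ[Q] fun p =>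
      -Real.log (P.rnDeriv Q p).toReal - alpha * LE p.2 p.1 := by
    filter_upwards [hlogQ] with p hp
    simp only [hψdef, hudef, hvdef]
    rw [hp]; ring
  have iψQ : Integrable ψ Q := (ilogQ.neg'.sub (hint4.const_mul alpha)).congr hψQ.symm
  have intψQ : ∫ p, ψ p ∂Q = klReal Q P - alpha * ∫ p, LE p.2 p.1 ∂Q := by
    rw [integral_congr_ae hψQ, integral_sub ilogQ.neg' (hint4.const_mul alpha),
      integral_neg, intlogQ, integral_const_mul alpha _]
    ring
  -- marginal integrability of u and v
  have iψQ' : Integrable ψ (μS.prod ν) := by rwa [hQdef] at iψQ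
  have hu : Integrable u μS := by
    have h := iψQ'.prod_left_ae
    obtain ⟨w0, hw0⟩ := h.exists
    have : Integrable (fun s => ψ (s, w0) - v w0) μS := hw0.sub (integrable_const _)
    refine this.congr (Filter.Eventually.of_forall fun s => ?_)
    simp [hψdef]
  have hv : Integrable v ν := by
    have h := iψQ'.prod_right_ae
    obtain ⟨s0, hs0⟩ := h.exists
    have : Integrable (fun w => ψ (s0, w) - u s0) ν := hs0.sub (integrable_const _)
    refine this.congr (Filter.Eventually.of_forall fun w => ?_)
    simp [hψdef]
  -- marginals of P and Q
  have hPfst : P.map Prod.fst = μS := Measure.fst_compProd μS κ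
  have hPsnd : P.map Prod.snd = ν := rfl
  have hQfst : Q.map Prod.fst = μS := Measure.fst_prod
  have hQsnd : Q.map Prod.snd = ν := Measure.snd_prod
  have huP : Integrable (fun p => u p.1) P := by
    have h : Integrable u (P.map Prod.fst) := by rwa [hPfst]
    exact (integrable_map_measure hum.aestronglyMeasurable measurable_fst.aemeasurable).mp h
  have hvP : Integrable (fun p => v p.2) P := by
    have h : Integrable v (P.map Prod.snd) := by rwa [hPsnd]
    exact (integrable_map_measure hvm.aestronglyMeasurable measurable_snd.aemeasurable).mp h
  have huQ : Integrable (fun p => u p.1) Q := by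
    have h : Integrable u (Q.map Prod.fst) := by rwa [hQfst]
    exact (integrable_map_measure hum.aestronglyMeasurable measurable_fst.aemeasurable).mp h
  have hvQ : Integrable (fun p => v p.2) Q := by
    have h : Integrable v (Q.map Prod.snd) := by rwa [hQsnd]
    exact (integrable_map_measure hvm.aestronglyMeasurable measurable_snd.aemeasurable).mp h
  -- ∫ψ over P equals ∫ψ over Q
  have hsplit : ∀ (μ : Measure ((Fin n → Z) × W)), μ.map Prod.fst = μS → μ.map Prod.snd = ν →
      Integrable (fun p => u p.1) μ → Integrable (fun p => v p.2) μ →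
      ∫ p, ψ p ∂μ = ∫ s, u s ∂μS + ∫ w, v w ∂ν := by
    intro μ hfst hsnd hu' hv'
    have : ∫ p, ψ p ∂μ = ∫ p, u p.1 ∂μ + ∫ p, v p.2 ∂μ := integral_add hu' hv'
    rw [this]
    congr 1
    · rw [← hfst, integral_map measurable_fst.aemeasurable hum.aestronglyMeasurable]
    · rw [← hsnd, integral_map measurable_snd.aemeasurable hvm.aestronglyMeasurable]
  have hψPQ : ∫ p, ψ p ∂P = ∫ p, ψ p ∂Q := by
    rw [hsplit P hPfst hPsnd huP hvP, hsplit Q hQfst hQsnd huQ hvQ]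
  -- identification of ∫ LE over Q with ∫ LP over P
  have hint4' : Integrable (fun p => LE p.2 p.1) (μS.prod ν) := by rwa [hQdef] at hint4
  have hLPν : Integrable LP ν := by
    have h := hint4'.integral_prod_right
    refine h.congr (Filter.Eventually.of_forall fun w => ?_)
    rw [hLP]
  have hIQ : ∫ p, LE p.2 p.1 ∂Q = ∫ w, LP w ∂ν := by
    rw [hQdef, integral_prod_symm _ hint4']
    refine integral_congr_ae (Filter.Eventually.of_forall fun w => ?_)
    rw [hLP]
  have hLPP : Integrable (fun p => LP p.2) P := by
    have h : Integrable LP (P.map Prod.snd) := by rwa [hPsnd]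
    exact (integrable_map_measure hLPν.aestronglyMeasurable measurable_snd.aemeasurable).mp h
  have hLPint : ∫ p, LP p.2 ∂P = ∫ w, LP w ∂ν := by
    rw [← hPsnd, integral_map measurable_snd.aemeasurable hLPν.aestronglyMeasurable]
  -- final computation
  have hmain : -klReal P Q - alpha * ∫ p, LE p.2 p.1 ∂P
      = klReal Q P - alpha * ∫ p, LE p.2 p.1 ∂Q := by
    rw [← intψP, ← intψQ, hψPQ]
  rw [integral_sub hLPP hint3, hLPint, ← hIQ, mul_sub]
  linarith
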